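/- Let G and G' be graphs and let C be a blob of G. If C is not immersed in any blob of G', then G is not immersed in G'. -/

import Mathlib

open SimpleGraph

/-- An immersion (strong immersion) of `H` into `G`. -/
structure Immersion {V W : Type*} (H : SimpleGraph V) (G : SimpleGraph W) where
  toFun : V → W
  injective : Function.Injective toFun
  walk : ∀ ⦃u v : V⦄, H.Adj u v → G.Walk (toFun u) (toFun v)
  walk_isPath : ∀ ⦃u v : V⦄ (h : H.Adj u v), (walk h).IsPath
  walk_nontrivial : ∀ ⦃u v : V⦄ (h : H.Adj u v), 0 < (walk h).length
  walk_symm : ∀ ⦃u v : V⦄ (h : H.Adj u v), walk h.symm = (walk h).reverse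
  walk_edgeDisjoint : ∀ ⦃u v u' v' : V⦄ (h : H.Adj u v) (h' : H.Adj u' v'),
    s(u, v) ≠ s(u', v') → ∀ e ∈ (walk h).edges, e ∉ (walk h').edges
  avoid : ∀ ⦃u v : V⦄ (h : H.Adj u v) (w : V), w ≠ u → w ≠ v → toFun w ∉ (walk h).support

/-- `H` is immersed in `G`. -/
def Immersed {V W : Type*} (H : SimpleGraph V) (G : SimpleGraph W) : Prop :=
  Nonempty (Immersion H G)

/-- A graph is 2-edge-connected if it is connected, has an edge, and stays connected
after deletion of any single edge. -/
def TwoEdgeConnected {V : Type*} (G : SimpleGraph V) : Prop :=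
  G.Connected ∧ G.edgeSet.Nonempty ∧ ∀ e ∈ G.edgeSet, (G.deleteEdges {e}).Connected

/-- A blob of `G` is a maximal 2-edge-connected subgraph of `G`. -/
def IsBlob {V : Type*} (G : SimpleGraph V) (B : G.Subgraph) : Prop :=
  TwoEdgeConnected B.coe ∧ ∀ B' : G.Subgraph, B ≤ B' → TwoEdgeConnected B'.coe → B' = B

/-- An immersion induces an isomorphism if its vertex map is a bijection preserving
and reflecting adjacency. -/
def Immersion.InducesIso {V W : Type*} {H : SimpleGraph V} {G : SimpleGraph W}
    (φ : Immersion H G) : Prop :=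
  Function.Bijective φ.toFun ∧ ∀ u v : V, H.Adj u v ↔ G.Adj (φ.toFun u) (φ.toFun v)

/-- An immersion is proper if it does not induce an isomorphism. -/
def Immersion.IsProper {V W : Type*} {H : SimpleGraph V} {G : SimpleGraph W}
    (φ : Immersion H G) : Prop := ¬ φ.InducesIso

/-- `H` is properly immersed in `G`. -/
def ProperlyImmersed {V W : Type*} (H : SimpleGraph V) (G : SimpleGraph W) : Prop :=
  ∃ φ : Immersion H G, φ.IsProper

/-- A self-immersion is trivial if it induces the identity map on vertices and sends
each edge to itself. -/
def Immersion.IsTrivial {V : Type*} {G : SimpleGraph V} (φ : Immersion G G) : Prop :=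
  (∀ v, φ.toFun v = v) ∧ ∀ ⦃u v : V⦄ (h : G.Adj u v), (φ.walk h).edges = [s(u, v)]

namespace BlobAux

variable {W : Type*} {G' : SimpleGraph W}

/-- Lift a walk of `G'` whose edges lie in a subgraph `B` to a walk of `B.coe`. -/
def liftWalk (B : G'.Subgraph) : ∀ {a b : W} (w : G'.Walk a b),
    (∀ e ∈ w.edges, e ∈ B.edgeSet) → ∀ (ha : a ∈ B.verts) (hb : b ∈ B.verts),
    B.coe.Walk ⟨a, ha⟩ ⟨b, hb⟩
  | _, _, Walk.nil, _, _, _ => Walk.nil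
  | a, b, Walk.cons (v := c) hadj p, hw, ha, hb =>
      have hac : B.Adj a c := Subgraph.mem_edgeSet.mp (hw _ (by simp))
      Walk.cons (id hac : B.coe.Adj ⟨a, ha⟩ ⟨c, hac.snd_mem⟩)
        (liftWalk B p (fun e he => hw e (by simp [he])) _ hb)

lemma liftWalk_support (B : G'.Subgraph) : ∀ {a b : W} (w : G'.Walk a b) (hw) (ha) (hb),
    (liftWalk B w hw ha hb).support.map Subtype.val = w.support
  | _, _, Walk.nil, _, _, _ => by simp [liftWalk]
  | _, _, Walk.cons hadj p, hw, ha, hb => by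
      simp [liftWalk, liftWalk_support B p _ _ _]

lemma liftWalk_edges (B : G'.Subgraph) : ∀ {a b : W} (w : G'.Walk a b) (hw) (ha) (hb),
    (liftWalk B w hw ha hb).edges.map (Sym2.map Subtype.val) = w.edges
  | _, _, Walk.nil, _, _, _ => by simp [liftWalk]
  | _, _, Walk.cons hadj p, hw, ha, hb => by
      simp [liftWalk, liftWalk_edges B p _ _ _, Sym2.map_pair_eq]

lemma liftWalk_length (B : G'.Subgraph) : ∀ {a b : W} (w : G'.Walk a b) (hw) (ha) (hb),
    (liftWalk B w hw ha hb).length = w.length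
  | _, _, Walk.nil, _, _, _ => by simp [liftWalk]
  | _, _, Walk.cons hadj p, hw, ha, hb => by
      simp [liftWalk, liftWalk_length B p _ _ _]

lemma liftWalk_isPath (B : G'.Subgraph) {a b : W} (w : G'.Walk a b) (hw) (ha) (hb)
    (hp : w.IsPath) : (liftWalk B w hw ha hb).IsPath := by
  rw [Walk.isPath_def] at hp ⊢
  exact List.Nodup.of_map _ (by rw [liftWalk_support]; exact hp)

lemma liftWalk_hcongr (B : G'.Subgraph) {a b : W} {w₁ w₂ : G'.Walk a b} (h : w₁ = w₂)
    (hw₁ hw₂ ha hb) : liftWalk B w₁ hw₁ ha hb = liftWalk B w₂ hw₂ ha hb := by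
  subst h; rfl

lemma liftWalk_append (B : G'.Subgraph) : ∀ {a b c : W} (w₁ : G'.Walk a b) (w₂ : G'.Walk b c)
    (hw : ∀ e ∈ (w₁.append w₂).edges, e ∈ B.edgeSet) (hw₁) (hw₂) (ha) (hb) (hc),
    liftWalk B (w₁.append w₂) hw ha hc
      = (liftWalk B w₁ hw₁ ha hb).append (liftWalk B w₂ hw₂ hb hc)
  | _, _, _, Walk.nil, w₂, _, _, _, _, _, _ => rfl
  | _, _, _, Walk.cons hadj p, w₂, hw, hw₁, hw₂, ha, hb, hc => by
      show Walk.cons _ _ = Walk.cons _ _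
      congr 1
      exact liftWalk_append B p w₂ _ (fun e he => hw₁ e (by simp [he])) hw₂ _ hb hc

lemma liftWalk_reverse (B : G'.Subgraph) : ∀ {a b : W} (w : G'.Walk a b) (hw) (ha) (hb),
    (liftWalk B w hw ha hb).reverse
      = liftWalk B w.reverse
          (fun e he => hw e (by rwa [Walk.edges_reverse, List.mem_reverse] at he)) hb ha
  | _, _, Walk.nil, _, _, _ => by simp [liftWalk]
  | a, b, Walk.cons (v := c) hadj p, hw, ha, hb => by
      have hac : B.Adj a c := Subgraph.mem_edgeSet.mp (hw _ (by simp))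
      show (Walk.cons _ (liftWalk B p _ _ _)).reverse = _
      rw [Walk.reverse_cons, liftWalk_reverse B p _ _ _]
      rw [show (Walk.cons ((by exact hac : B.coe.Adj ⟨a, ha⟩ ⟨c, hac.snd_mem⟩)).symm Walk.nil)
            = liftWalk B (Walk.cons hadj.symm Walk.nil)
              (fun e he => by
                simp only [Walk.edges_cons, Walk.edges_nil, List.mem_singleton] at he
                subst he; rw [Sym2.eq_swap]; exact hw _ (by simp)) hac.snd_mem ha from rfl]
      rw [← liftWalk_append B p.reverse (Walk.cons hadj.symm Walk.nil)
            (fun e he => by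
              rw [Walk.edges_append, List.mem_append] at he
              rcases he with he | he
              · rw [Walk.edges_reverse, List.mem_reverse] at he
                exact hw e (by simp [he])
              · simp only [Walk.edges_cons, Walk.edges_nil, List.mem_singleton] at he
                subst he; rw [Sym2.eq_swap]; exact hw _ (by simp)) _ _ hb hac.snd_mem ha]
      exact liftWalk_hcongr B (Walk.reverse_cons hadj p).symm _ _ _ _

lemma map_val_mem (B : G'.Subgraph) {e : Sym2 B.verts} (he : e ∈ B.coe.edgeSet) :
    Sym2.map Subtype.val e ∈ B.edgeSet := by
  induction e using Sym2.ind with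
  | _ x y =>
    rw [Sym2.map_pair_eq, Subgraph.mem_edgeSet]
    exact (SimpleGraph.mem_edgeSet _).mp he

lemma reachable_delete (B : G'.Subgraph) (s : Set (Sym2 B.verts)) :
    ∀ {a b : W} (w : G'.Walk a b),
      (∀ e ∈ w.edges, e ∈ B.edgeSet ∧ e ∉ Sym2.map Subtype.val '' s) →
      ∀ (ha : a ∈ B.verts) (hb : b ∈ B.verts),
      (B.coe.deleteEdges s).Reachable ⟨a, ha⟩ ⟨b, hb⟩
  | _, _, Walk.nil, _, _, _ => Reachable.refl _
  | a, b, Walk.cons (v := c) hadj p, hw, ha, hb => by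
      have h1 := hw _ List.mem_cons_self
      have hBadj : B.Adj a c := Subgraph.mem_edgeSet.mp h1.1
      have hc : c ∈ B.verts := hBadj.snd_mem
      have adj : (B.coe.deleteEdges s).Adj ⟨a, ha⟩ ⟨c, hc⟩ := by
        rw [SimpleGraph.deleteEdges_adj]
        exact ⟨hBadj, fun hs => h1.2 ⟨_, hs, Sym2.map_pair_eq _ _ _⟩⟩
      exact adj.reachable.trans
        (reachable_delete B s p (fun e he => hw e (by simp [he])) hc hb)

lemma exists_walk_of_reachable (B : G'.Subgraph) {x y : B.verts} (h : B.coe.Reachable x y) :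
    ∃ w : G'.Walk x.val y.val, ∀ e ∈ w.edges, e ∈ B.edgeSet := by
  obtain ⟨p⟩ := h
  refine ⟨p.map ⟨Subtype.val, fun hadj => B.adj_sub hadj⟩, ?_⟩
  intro e he
  rw [Walk.edges_map] at he
  obtain ⟨e₀, he₀, rfl⟩ := List.mem_map.mp he
  exact map_val_mem B (p.edges_subset_edgeSet he₀)

lemma exists_walk_of_reachable_delete (B : G'.Subgraph) (s : Set (Sym2 B.verts)) {x y : B.verts}
    (h : (B.coe.deleteEdges s).Reachable x y) :
    ∃ w : G'.Walk x.val y.val,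
      ∀ e ∈ w.edges, e ∈ B.edgeSet ∧ e ∉ Sym2.map Subtype.val '' s := by
  obtain ⟨p⟩ := h
  refine ⟨p.map ⟨Subtype.val, fun hadj => B.adj_sub (SimpleGraph.deleteEdges_adj.mp hadj).1⟩, ?_⟩
  intro e he
  rw [Walk.edges_map] at he
  obtain ⟨e₀, he₀, rfl⟩ := List.mem_map.mp he
  have := p.edges_subset_edgeSet he₀
  rw [SimpleGraph.edgeSet_deleteEdges] at this
  refine ⟨map_val_mem B this.1, ?_⟩
  rintro ⟨e₁, he₁, heq⟩
  exact this.2 (Sym2.map.injective Subtype.val_injective heq ▸ he₁)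

lemma twoEdgeConnected_coe (B : G'.Subgraph)
    (hne : B.verts.Nonempty)
    (hconn : ∀ a ∈ B.verts, ∀ b ∈ B.verts, ∃ w : G'.Walk a b, ∀ e ∈ w.edges, e ∈ B.edgeSet)
    (hedge : B.edgeSet.Nonempty)
    (hdel : ∀ f ∈ B.edgeSet, ∀ a ∈ B.verts, ∀ b ∈ B.verts,
      ∃ w : G'.Walk a b, ∀ e ∈ w.edges, e ∈ B.edgeSet ∧ e ≠ f) :
    TwoEdgeConnected B.coe := by
  haveI hne' : Nonempty B.verts := hne.to_subtype
  refine ⟨⟨fun x y => ?_⟩, ?_, ?_⟩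
  · obtain ⟨w, hw⟩ := hconn x x.2 y y.2
    exact ⟨liftWalk B w hw x.2 y.2⟩
  · obtain ⟨f, hf⟩ := hedge
    induction f using Sym2.ind with
    | _ p q =>
      have hpq : B.Adj p q := Subgraph.mem_edgeSet.mp hf
      exact ⟨s(⟨p, hpq.fst_mem⟩, ⟨q, hpq.snd_mem⟩), by
        rw [SimpleGraph.mem_edgeSet]; exact hpq⟩
  · intro e he
    induction e using Sym2.ind with
    | _ x y =>
      have hxy : B.coe.Adj x y := (SimpleGraph.mem_edgeSet _).mp he
      have hf : s(x.val, y.val) ∈ B.edgeSet := Subgraph.mem_edgeSet.mpr hxy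
      refine ⟨fun p q => ?_⟩
      obtain ⟨w, hw⟩ := hdel _ hf p.val p.2 q.val q.2
      refine reachable_delete B {s(x, y)} w (fun e' he' => ⟨(hw e' he').1, ?_⟩) p.2 q.2
      rintro ⟨e₁, he₁, heq⟩
      rw [Set.mem_singleton_iff] at he₁
      subst he₁
      exact (hw e' he').2 (by rw [← heq, Sym2.map_pair_eq])

lemma exists_walk_avoiding (B : G'.Subgraph) (h2 : TwoEdgeConnected B.coe) (f : Sym2 W)
    {a b : W} (ha : a ∈ B.verts) (hb : b ∈ B.verts) :
    ∃ w : G'.Walk a b, ∀ e ∈ w.edges, e ∈ B.edgeSet ∧ e ≠ f := by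
  induction f using Sym2.ind with
  | _ p q =>
    by_cases hf : s(p, q) ∈ B.edgeSet
    · have hadj : B.Adj p q := Subgraph.mem_edgeSet.mp hf
      have he : s((⟨p, hadj.fst_mem⟩ : B.verts), (⟨q, hadj.snd_mem⟩ : B.verts)) ∈ B.coe.edgeSet := by
        rw [SimpleGraph.mem_edgeSet]; exact hadj
      have hr := (h2.2.2 _ he).preconnected ⟨a, ha⟩ ⟨b, hb⟩
      obtain ⟨w, hw⟩ := exists_walk_of_reachable_delete B _ hr
      refine ⟨w, fun e heW => ⟨(hw e heW).1, fun hef => (hw e heW).2 ?_⟩⟩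
      subst hef
      exact ⟨_, Set.mem_singleton _, Sym2.map_pair_eq _ _ _⟩
    · have hr := h2.1.preconnected ⟨a, ha⟩ ⟨b, hb⟩
      obtain ⟨w, hw⟩ := exists_walk_of_reachable B hr
      exact ⟨w, fun e heW => ⟨hw e heW, fun hef => hf (hef ▸ hw e heW)⟩⟩

theorem exists_blob_immersion {U : Type*} {H : SimpleGraph U}
    (h2 : TwoEdgeConnected H) (ψ : Immersion H G') :
    ∃ D : G'.Subgraph, IsBlob G' D ∧ Immersed H D.coe := by
  classical
  obtain ⟨hHconn, hHedge, hHdel⟩ := h2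
  set D₀ : G'.Subgraph := ⨆ u, ⨆ v, ⨆ h : H.Adj u v, (ψ.walk h).toSubgraph with hD₀def
  have hD₀verts : ∀ x, x ∈ D₀.verts ↔ ∃ u v, ∃ h : H.Adj u v, x ∈ (ψ.walk h).support := by
    intro x
    simp only [hD₀def, Subgraph.verts_iSup, Set.mem_iUnion, Walk.mem_verts_toSubgraph]
  have hD₀edge : ∀ e, e ∈ D₀.edgeSet ↔ ∃ u v, ∃ h : H.Adj u v, e ∈ (ψ.walk h).edges := by
    intro e
    simp only [hD₀def, Subgraph.edgeSet_iSup, Set.mem_iUnion, Walk.mem_edges_toSubgraph]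
  have walk_le : ∀ {u v : U} (h : H.Adj u v), ∀ e ∈ (ψ.walk h).edges, e ∈ D₀.edgeSet :=
    fun {u v} h e he => (hD₀edge e).mpr ⟨u, v, h, he⟩
  have exists_adj : ∀ u : U, ∃ v, H.Adj u v := by
    intro u
    obtain ⟨e, he⟩ := hHedge
    revert he
    induction e using Sym2.ind with
    | _ x y =>
      intro he
      rw [SimpleGraph.mem_edgeSet] at he
      obtain ⟨p⟩ := hHconn.preconnected u x
      cases p with
      | nil => exact ⟨y, he⟩
      | cons hadj _ => exact ⟨_, hadj⟩
  have hψmem : ∀ u : U, ψ.toFun u ∈ D₀.verts := by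
    intro u
    obtain ⟨v, h⟩ := exists_adj u
    exact (hD₀verts _).mpr ⟨u, v, h, Walk.start_mem_support _⟩
  obtain ⟨a₀⟩ := hHconn.nonempty
  have reach_image : ∀ a b : U, ∃ w : G'.Walk (ψ.toFun a) (ψ.toFun b),
      ∀ e ∈ w.edges, e ∈ D₀.edgeSet := by
    intro a b
    obtain ⟨p⟩ := hHconn.preconnected a b
    induction p with
    | nil => exact ⟨Walk.nil, by simp⟩
    | cons hadj p ih =>
      obtain ⟨w, hw⟩ := ih
      refine ⟨(ψ.walk hadj).append w, ?_⟩
      intro e he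
      rw [Walk.edges_append, List.mem_append] at he
      rcases he with he | he
      · exact walk_le hadj e he
      · exact hw e he
  have to_base : ∀ x ∈ D₀.verts, ∃ w : G'.Walk x (ψ.toFun a₀),
      ∀ e ∈ w.edges, e ∈ D₀.edgeSet := by
    intro x hx
    rw [hD₀verts] at hx
    obtain ⟨u, v, h, hx⟩ := hx
    obtain ⟨w, hw⟩ := reach_image u a₀
    refine ⟨((ψ.walk h).takeUntil x hx).reverse.append w, ?_⟩
    intro e he
    rw [Walk.edges_append, List.mem_append] at he
    rcases he with he | he
    · rw [Walk.edges_reverse, List.mem_reverse] at he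
      exact walk_le h e (Walk.edges_takeUntil_subset _ hx he)
    · exact hw e he
  have hconnD₀ : ∀ a ∈ D₀.verts, ∀ b ∈ D₀.verts, ∃ w : G'.Walk a b,
      ∀ e ∈ w.edges, e ∈ D₀.edgeSet := by
    intro a ha b hb
    obtain ⟨wa, hwa⟩ := to_base a ha
    obtain ⟨wb, hwb⟩ := to_base b hb
    refine ⟨wa.append wb.reverse, ?_⟩
    intro e he
    rw [Walk.edges_append, List.mem_append] at he
    rcases he with he | he
    · exact hwa e he
    · rw [Walk.edges_reverse, List.mem_reverse] at he
      exact hwb e he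
  have hedgeD₀ : D₀.edgeSet.Nonempty := by
    obtain ⟨e, he⟩ := hHedge
    revert he
    induction e using Sym2.ind with
    | _ x y =>
      intro he
      rw [SimpleGraph.mem_edgeSet] at he
      have hlen := ψ.walk_nontrivial he
      rw [← Walk.length_edges] at hlen
      obtain ⟨e', he'⟩ := List.exists_mem_of_ne_nil _ (List.length_pos_iff.mp hlen)
      exact ⟨e', walk_le he e' he'⟩
  have hdelD₀ : ∀ f ∈ D₀.edgeSet, ∀ a ∈ D₀.verts, ∀ b ∈ D₀.verts,
      ∃ w : G'.Walk a b, ∀ e ∈ w.edges, e ∈ D₀.edgeSet ∧ e ≠ f := by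
    intro f hf
    rw [hD₀edge] at hf
    obtain ⟨u₀, v₀, h₀, hf₀⟩ := hf
    have hA : ∀ {u v : U} (h : H.Adj u v), s(u, v) ≠ s(u₀, v₀) →
        ∀ e ∈ (ψ.walk h).edges, e ∈ D₀.edgeSet ∧ e ≠ f :=
      fun {u v} h hne e he => ⟨walk_le h e he,
        fun hef => ψ.walk_edgeDisjoint h h₀ hne e he (hef ▸ hf₀)⟩
    have hHdel' := hHdel s(u₀, v₀) ((SimpleGraph.mem_edgeSet H).mpr h₀)
    have hB : ∀ a b : U, ∃ w : G'.Walk (ψ.toFun a) (ψ.toFun b),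
        ∀ e ∈ w.edges, e ∈ D₀.edgeSet ∧ e ≠ f := by
      intro a b
      obtain ⟨p⟩ := hHdel'.preconnected a b
      induction p with
      | nil => exact ⟨Walk.nil, by simp⟩
      | cons hadj p ih =>
        obtain ⟨w, hw⟩ := ih
        have hadj1 : H.Adj _ _ := (SimpleGraph.deleteEdges_adj.mp hadj).1
        have hne := (SimpleGraph.deleteEdges_adj.mp hadj).2
        rw [Set.mem_singleton_iff] at hne
        refine ⟨(ψ.walk hadj1).append w, ?_⟩
        intro e he
        rw [Walk.edges_append, List.mem_append] at he
        rcases he with he | he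
        · exact hA hadj1 hne e he
        · exact hw e he
    have hC : ∀ x ∈ D₀.verts, ∃ w : G'.Walk x (ψ.toFun u₀),
        ∀ e ∈ w.edges, e ∈ D₀.edgeSet ∧ e ≠ f := by
      intro x hx
      rw [hD₀verts] at hx
      obtain ⟨u, v, h, hx⟩ := hx
      by_cases hcase : s(u, v) = s(u₀, v₀)
      · have hx₀ : x ∈ (ψ.walk h₀).support := by
          rcases Sym2.eq_iff.mp hcase with ⟨rfl, rfl⟩ | ⟨rfl, rfl⟩
          · exact hx
          · have hsymm : ψ.walk h = (ψ.walk h₀).reverse := ψ.walk_symm h₀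
            rw [hsymm, Walk.support_reverse, List.mem_reverse] at hx
            exact hx
        have hsplit := congrArg Walk.edges ((ψ.walk h₀).take_spec hx₀)
        rw [Walk.edges_append] at hsplit
        have hnd : (((ψ.walk h₀).takeUntil x hx₀).edges
            ++ ((ψ.walk h₀).dropUntil x hx₀).edges).Nodup := by
          rw [hsplit]
          exact (ψ.walk_isPath h₀).edges_nodup
        have hf₀' : f ∈ ((ψ.walk h₀).takeUntil x hx₀).edges
            ++ ((ψ.walk h₀).dropUntil x hx₀).edges := by
          rw [hsplit]; exact hf₀
        by_cases hft : f ∈ ((ψ.walk h₀).takeUntil x hx₀).edges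
        · have hfd : f ∉ ((ψ.walk h₀).dropUntil x hx₀).edges :=
            fun hfd => (List.nodup_append'.mp hnd).2.2 hft hfd
          obtain ⟨w, hw⟩ := hB v₀ u₀
          refine ⟨((ψ.walk h₀).dropUntil x hx₀).append w, ?_⟩
          intro e he
          rw [Walk.edges_append, List.mem_append] at he
          rcases he with he | he
          · exact ⟨walk_le h₀ e (Walk.edges_dropUntil_subset _ hx₀ he),
              fun hef => hfd (hef ▸ he)⟩
          · exact hw e he
        · refine ⟨((ψ.walk h₀).takeUntil x hx₀).reverse, ?_⟩
          intro e he
          rw [Walk.edges_reverse, List.mem_reverse] at he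
          exact ⟨walk_le h₀ e (Walk.edges_takeUntil_subset _ hx₀ he),
            fun hef => hft (hef ▸ he)⟩
      · obtain ⟨w, hw⟩ := hB u u₀
        refine ⟨((ψ.walk h).takeUntil x hx).reverse.append w, ?_⟩
        intro e he
        rw [Walk.edges_append, List.mem_append] at he
        rcases he with he | he
        · rw [Walk.edges_reverse, List.mem_reverse] at he
          exact hA h hcase e (Walk.edges_takeUntil_subset _ hx he)
        · exact hw e he
    intro a ha b hb
    obtain ⟨wa, hwa⟩ := hC a ha
    obtain ⟨wb, hwb⟩ := hC b hb
    refine ⟨wa.append wb.reverse, ?_⟩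
    intro e he
    rw [Walk.edges_append, List.mem_append] at he
    rcases he with he | he
    · exact hwa e he
    · rw [Walk.edges_reverse, List.mem_reverse] at he
      exact hwb e he
  have hD₀2 : TwoEdgeConnected D₀.coe :=
    twoEdgeConnected_coe D₀ ⟨ψ.toFun a₀, hψmem a₀⟩ hconnD₀ hedgeD₀ hdelD₀
  set S : Set G'.Subgraph := {B | D₀ ≤ B ∧ TwoEdgeConnected B.coe} with hSdef
  have hD₀S : D₀ ∈ S := ⟨le_refl _, hD₀2⟩
  set D : G'.Subgraph := sSup S with hDdef
  have hle : D₀ ≤ D := le_sSup hD₀S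
  have hz : ψ.toFun a₀ ∈ D.verts := hle.1 (hψmem a₀)
  have hmemS : ∀ x ∈ D.verts, ∃ B ∈ S, x ∈ B.verts := by
    intro x hx
    rw [hDdef, Subgraph.verts_sSup] at hx
    simpa using hx
  have hto_z : ∀ x ∈ D.verts, ∀ f : Sym2 W, ∃ w : G'.Walk x (ψ.toFun a₀),
      ∀ e ∈ w.edges, e ∈ D.edgeSet ∧ e ≠ f := by
    intro x hx f
    obtain ⟨B, hBS, hxB⟩ := hmemS x hx
    obtain ⟨w, hw⟩ := exists_walk_avoiding B hBS.2 f hxB (hBS.1.1 (hψmem a₀))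
    exact ⟨w, fun e he => ⟨Subgraph.edgeSet_mono (le_sSup hBS) (hw e he).1, (hw e he).2⟩⟩
  have hD2 : TwoEdgeConnected D.coe := by
    refine twoEdgeConnected_coe D ⟨_, hz⟩ ?_ ?_ ?_
    · intro a ha b hb
      obtain ⟨wa, hwa⟩ := hto_z a ha s(a, a)
      obtain ⟨wb, hwb⟩ := hto_z b hb s(a, a)
      refine ⟨wa.append wb.reverse, ?_⟩
      intro e he
      rw [Walk.edges_append, List.mem_append] at he
      rcases he with he | he
      · exact (hwa e he).1
      · rw [Walk.edges_reverse, List.mem_reverse] at he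
        exact (hwb e he).1
    · obtain ⟨e, he⟩ := hedgeD₀
      exact ⟨e, Subgraph.edgeSet_mono hle he⟩
    · intro f _hf a ha b hb
      obtain ⟨wa, hwa⟩ := hto_z a ha f
      obtain ⟨wb, hwb⟩ := hto_z b hb f
      refine ⟨wa.append wb.reverse, ?_⟩
      intro e he
      rw [Walk.edges_append, List.mem_append] at he
      rcases he with he | he
      · exact hwa e he
      · rw [Walk.edges_reverse, List.mem_reverse] at he
        exact hwb e he
  have hblob : IsBlob G' D :=
    ⟨hD2, fun B' hles h2' => le_antisymm (le_sSup ⟨le_trans hle hles, h2'⟩) hles⟩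
  have hvD : ∀ u, ψ.toFun u ∈ D.verts := fun u => hle.1 (hψmem u)
  have hwD : ∀ {u v : U} (h : H.Adj u v), ∀ e ∈ (ψ.walk h).edges, e ∈ D.edgeSet :=
    fun {u v} h e he => Subgraph.edgeSet_mono hle (walk_le h e he)
  refine ⟨D, hblob, ⟨?_⟩⟩
  exact {
    toFun := fun u => ⟨ψ.toFun u, hvD u⟩
    injective := fun a b hab => ψ.injective (congrArg Subtype.val hab)
    walk := fun u v h => liftWalk D (ψ.walk h) (hwD h) (hvD u) (hvD v)
    walk_isPath := fun u v h => liftWalk_isPath D _ _ _ _ (ψ.walk_isPath h)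
    walk_nontrivial := fun u v h => by rw [liftWalk_length]; exact ψ.walk_nontrivial h
    walk_symm := fun u v h => by
      rw [liftWalk_reverse]
      exact liftWalk_hcongr D (ψ.walk_symm h) _ _ _ _
    walk_edgeDisjoint := fun u v u' v' h h' hne e he he' => by
      have h1 : Sym2.map Subtype.val e ∈ (ψ.walk h).edges := by
        rw [← liftWalk_edges D (ψ.walk h) (hwD h) (hvD u) (hvD v)]
        exact List.mem_map_of_mem he
      have h2 : Sym2.map Subtype.val e ∈ (ψ.walk h').edges := by
        rw [← liftWalk_edges D (ψ.walk h') (hwD h') (hvD u') (hvD v')]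
        exact List.mem_map_of_mem he'
      exact ψ.walk_edgeDisjoint h h' hne _ h1 h2
    avoid := fun u v h w hwu hwv hmem => by
      have hsupp : ψ.toFun w ∈ (ψ.walk h).support := by
        rw [← liftWalk_support D (ψ.walk h) (hwD h) (hvD u) (hvD v)]
        exact List.mem_map_of_mem hmem
      exact ψ.avoid h w hwu hwv hsupp
  }

/-- Restriction of an immersion of `G` to a subgraph `C` of `G`. -/
def restrictImmersion {V : Type*} {G : SimpleGraph V} (φ : Immersion G G') (C : G.Subgraph) :
    Immersion C.coe G' where
  toFun v := φ.toFun v.val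
  injective a b hab := Subtype.ext (φ.injective hab)
  walk {u v} h := φ.walk (C.adj_sub h)
  walk_isPath {u v} h := φ.walk_isPath _
  walk_nontrivial {u v} h := φ.walk_nontrivial _
  walk_symm {u v} h := φ.walk_symm (C.adj_sub h)
  walk_edgeDisjoint {u v u' v'} h h' hne :=
    φ.walk_edgeDisjoint _ _ (fun hcon => hne (Sym2.map.injective Subtype.val_injective
      (by rw [Sym2.map_pair_eq, Sym2.map_pair_eq]; exact hcon)))
  avoid {u v} h w hwu hwv :=
    φ.avoid _ w.val (fun hc => hwu (Subtype.ext hc)) (fun hc => hwv (Subtype.ext hc))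

end BlobAux

/-- If `C` is a blob of `G` and `C` is not immersed in any blob of `G'`, then `G` is not
immersed in `G'`. -/
theorem not_immersed_of_blob {V W : Type} (G : SimpleGraph V) (G' : SimpleGraph W)
    (C : G.Subgraph) (hC : IsBlob G C)
    (h : ∀ D : G'.Subgraph, IsBlob G' D → ¬ Immersed C.coe D.coe) :
    ¬ Immersed G G' := by
  rintro ⟨φ⟩
  obtain ⟨D, hD, hIm⟩ := BlobAux.exists_blob_immersion hC.1 (BlobAux.restrictImmersion φ C)
  exact h D hD hIm
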